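/- Lemma (flag-transitive subgroups of the group of a power complex, Lemma 4.3). Let 𝒦 be a family of subsets of V with ∅ ∈ 𝒦. Let U be a subgroup of Equiv.Perm N acting transitively on N, and let Λ be a subgroup of Aut(𝒦) acting transitively on the set of maximal chains of (𝒦, ⊆). Then every θ_{σ,φ} with σ ∈ ∏_{i∈V} U and φ ∈ Λ maps ℱ bijectively onto ℱ, and the group {θ_{σ,φ} : σ ∈ ∏_{i∈V} U, φ ∈ Λ} acts transitively on the set of maximal chains of (ℱ, ⊆). (That is, U ≀ Λ is a flag-transitive subgroup of the automorphism group of the power complex n^𝒦.) -/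

import Mathlib

/-- The face `F(ε)` of the power complex. -/
def face (n v : ℕ) (F : Set (Fin v)) (ε : Fin v → Fin n) : Set (Fin v → Fin n) :=
  {η | ∀ i ∉ F, η i = ε i}

/-- The power complex `n^𝒦`, as a family of subsets of `V → N`. -/
def powerComplex (n v : ℕ) (𝒦 : Set (Set (Fin v))) : Set (Set (Fin v → Fin n)) :=
  {A | ∃ F ∈ 𝒦, ∃ ε : Fin v → Fin n, A = face n v F ε}

/-- The permutation `θ_{σ,φ}` of `V → N`. -/
def theta {n v : ℕ} (σ : Fin v → Equiv.Perm (Fin n)) (φ : Equiv.Perm (Fin v)) :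
    Equiv.Perm (Fin v → Fin n) where
  toFun η i := σ (φ⁻¹ i) (η (φ⁻¹ i))
  invFun η i := (σ i)⁻¹ (η (φ i))
  left_inv η := by funext i; simp
  right_inv η := by funext i; simp

/-- `C` is a maximal chain of the family `S` partially ordered by inclusion. -/
def IsMaxChainIn {α : Type*} (S : Set (Set α)) (C : Set (Set α)) : Prop :=
  C ⊆ S ∧ IsChain (· ⊆ ·) C ∧
    ∀ C' : Set (Set α), C' ⊆ S → IsChain (· ⊆ ·) C' → C ⊆ C' → C' = C

section Helpers

variable {n v : ℕ}

lemma mem_face_self (F : Set (Fin v)) (ε : Fin v → Fin n) : ε ∈ face n v F ε :=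
  fun _ _ => rfl

lemma face_nonempty (F : Set (Fin v)) (ε : Fin v → Fin n) : (face n v F ε).Nonempty :=
  ⟨ε, mem_face_self F ε⟩

lemma face_empty (ε : Fin v → Fin n) : face n v ∅ ε = {ε} := by
  ext η
  simp only [face, Set.mem_setOf_eq, Set.mem_singleton_iff]
  constructor
  · intro h; funext i; exact h i (by simp)
  · rintro rfl; intro i _; rfl

lemma face_mono {F G : Set (Fin v)} (h : F ⊆ G) (ε : Fin v → Fin n) :
    face n v F ε ⊆ face n v G ε :=
  fun _ hη i hi => hη i (fun hF => hi (h hF))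

lemma face_congr {F : Set (Fin v)} {ε δ : Fin v → Fin n}
    (h : ∀ i ∉ F, ε i = δ i) : face n v F ε = face n v F δ := by
  ext η
  constructor <;> intro hη i hi
  · rw [hη i hi, h i hi]
  · rw [hη i hi, ← h i hi]

lemma mem_face_eq {G : Set (Fin v)} {ε δ : Fin v → Fin n} (h : ε ∈ face n v G δ) :
    face n v G δ = face n v G ε :=
  face_congr (fun i hi => (h i hi).symm)

lemma face_subset_iff (hn : 2 ≤ n) {F G : Set (Fin v)} {ε δ : Fin v → Fin n} :
    face n v F ε ⊆ face n v G δ ↔ F ⊆ G ∧ ∀ i ∉ G, ε i = δ i := by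
  have : Nontrivial (Fin n) := Fin.nontrivial_iff_two_le.mpr hn
  constructor
  · intro h
    have hεδ : ∀ i ∉ G, ε i = δ i := fun i hi => h (mem_face_self F ε) i hi
    refine ⟨?_, hεδ⟩
    intro i hiF
    by_contra hiG
    obtain ⟨a, ha⟩ := exists_ne (ε i)
    have hmem : Function.update ε i a ∈ face n v F ε := by
      intro j hj
      have hji : j ≠ i := fun e => hj (e ▸ hiF)
      exact Function.update_of_ne hji a ε
    have h2 := h hmem i hiG
    rw [Function.update_self] at h2
    exact ha (h2.trans (hεδ i hiG).symm)
  · rintro ⟨hFG, hεδ⟩ η hη i hi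
    rw [hη i (fun h => hi (hFG h)), hεδ i hi]

lemma face_inj (hn : 2 ≤ n) {F G : Set (Fin v)} {ε : Fin v → Fin n}
    (h : face n v F ε = face n v G ε) : F = G :=
  subset_antisymm ((face_subset_iff hn).mp h.subset).1
    ((face_subset_iff hn).mp h.symm.subset).1

lemma theta_image (σ : Fin v → Equiv.Perm (Fin n)) (φ : Equiv.Perm (Fin v))
    (F : Set (Fin v)) (ε : Fin v → Fin n) :
    theta σ φ '' face n v F ε = face n v (⇑φ '' F) (theta σ φ ε) := by
  ext η
  constructor
  · rintro ⟨μ, hμ, rfl⟩ i hi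
    show σ (φ⁻¹ i) (μ (φ⁻¹ i)) = σ (φ⁻¹ i) (ε (φ⁻¹ i))
    congr 1
    exact hμ _ (fun h => hi ⟨φ⁻¹ i, h, by simp⟩)
  · intro hη
    refine ⟨(theta σ φ).symm η, ?_, (theta σ φ).apply_symm_apply η⟩
    intro i hi
    show (σ i)⁻¹ (η (φ i)) = ε i
    have h1 : φ i ∉ ⇑φ '' F := by
      rintro ⟨j, hj, hji⟩
      exact hi (φ.injective hji ▸ hj)
    have h2 := hη (φ i) h1
    have h3 : theta σ φ ε (φ i) = σ i (ε i) := by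
      show σ (φ⁻¹ (φ i)) (ε (φ⁻¹ (φ i))) = σ i (ε i)
      simp
    rw [h2, h3]
    simp

lemma isChain_face_image (hn : 2 ≤ n) {𝒞 : Set (Set (Fin v))} (h : IsChain (· ⊆ ·) 𝒞)
    (ε : Fin v → Fin n) : IsChain (· ⊆ ·) ((fun F => face n v F ε) '' 𝒞) := by
  rintro _ ⟨F, hF, rfl⟩ _ ⟨G, hG, rfl⟩ hne
  rcases eq_or_ne F G with rfl | hFG
  · exact absurd rfl hne
  · rcases h hF hG hFG with h' | h'
    · exact Or.inl (face_mono h' ε)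
    · exact Or.inr (face_mono h' ε)

lemma mem_of_chain_singleton {ε : Fin v → Fin n} {D' : Set (Set (Fin v → Fin n))}
    (hch : IsChain (· ⊆ ·) D') (hs : ({ε} : Set (Fin v → Fin n)) ∈ D')
    {B : Set (Fin v → Fin n)} (hB : B ∈ D') (hBne : B.Nonempty) : ε ∈ B := by
  rcases eq_or_ne B {ε} with rfl | h
  · rfl
  · rcases hch hB hs h with h' | h'
    · obtain ⟨x, hx⟩ := hBne
      have : x = ε := h' hx
      rwa [this] at hx
    · exact h' rfl

/-- Lemma A: the image of a maximal chain of `𝒦` under `F ↦ F(ε)` is a maximal chain of `ℱ`. -/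
lemma maxchain_image (hn : 2 ≤ n) {𝒦 : Set (Set (Fin v))} (hempty : ∅ ∈ 𝒦)
    {𝒞 : Set (Set (Fin v))} (h𝒞 : IsMaxChainIn 𝒦 𝒞) (ε : Fin v → Fin n) :
    IsMaxChainIn (powerComplex n v 𝒦) ((fun F => face n v F ε) '' 𝒞) := by
  obtain ⟨hsub, hchain, hmax⟩ := h𝒞
  have hempty𝒞 : ∅ ∈ 𝒞 := by
    have h := hmax (insert ∅ 𝒞) (Set.insert_subset hempty hsub)
      (hchain.insert (fun G _ _ => Or.inl (Set.empty_subset G)))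
      (Set.subset_insert _ _)
    rw [← h]
    exact Set.mem_insert _ _
  refine ⟨?_, isChain_face_image hn hchain ε, ?_⟩
  · rintro _ ⟨F, hF, rfl⟩
    exact ⟨F, hsub hF, ε, rfl⟩
  · intro D' hD'sub hD'chain hDD'
    have hεD' : ({ε} : Set (Fin v → Fin n)) ∈ D' := by
      have h : face n v ∅ ε ∈ (fun F => face n v F ε) '' 𝒞 := ⟨∅, hempty𝒞, rfl⟩
      rw [face_empty] at h
      exact hDD' h
    apply Set.Subset.antisymm _ hDD'
    rintro B hB
    obtain ⟨G, hG, δ, rfl⟩ := hD'sub hB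
    have hεB : ε ∈ face n v G δ :=
      mem_of_chain_singleton hD'chain hεD' hB (face_nonempty G δ)
    rw [mem_face_eq hεB] at hB ⊢
    have hGmem : G ∈ 𝒞 := by
      have hins : insert G 𝒞 = 𝒞 := by
        refine hmax (insert G 𝒞) (Set.insert_subset hG hsub) ?_ (Set.subset_insert _ _)
        refine hchain.insert (fun F hF hGF => ?_)
        have hFD' : face n v F ε ∈ D' := hDD' ⟨F, hF, rfl⟩
        have hne : face n v G ε ≠ face n v F ε := fun h => hGF (face_inj hn h)
        rcases hD'chain hB hFD' hne with h' | h'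
        · exact Or.inl ((face_subset_iff hn).mp h').1
        · exact Or.inr ((face_subset_iff hn).mp h').1
      rw [← hins]
      exact Set.mem_insert _ _
    exact ⟨G, hGmem, rfl⟩

/-- Lemma B: every maximal chain of `ℱ` is the image of a maximal chain of `𝒦` under
`F ↦ F(ε)` for some `ε`. -/
lemma maxchain_structure (hn : 2 ≤ n) {𝒦 : Set (Set (Fin v))} (hempty : ∅ ∈ 𝒦)
    {D : Set (Set (Fin v → Fin n))} (hD : IsMaxChainIn (powerComplex n v 𝒦) D) :
    ∃ (ε : Fin v → Fin n) (𝒞 : Set (Set (Fin v))), IsMaxChainIn 𝒦 𝒞 ∧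
      D = (fun F => face n v F ε) '' 𝒞 := by
  obtain ⟨hsub, hchain, hmax⟩ := hD
  -- D is nonempty
  have hne : D.Nonempty := by
    rcases Set.eq_empty_or_nonempty D with rfl | h
    · exfalso
      set ε₀ : Fin v → Fin n := fun _ => ⟨0, by omega⟩
      have h0 := hmax {face n v ∅ ε₀} (by
          rintro _ rfl
          exact ⟨∅, hempty, ε₀, rfl⟩)
        (Set.subsingleton_singleton.isChain) (Set.empty_subset _)
      have : face n v ∅ ε₀ ∈ (∅ : Set (Set (Fin v → Fin n))) := h0 ▸ rfl
      exact this
    · exact h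
  -- D has a minimum
  obtain ⟨A₀, hA₀D, hA₀min⟩ := (Set.toFinite D).exists_minimal hne
  have hmin : ∀ B ∈ D, A₀ ⊆ B := by
    intro B hB
    rcases eq_or_ne A₀ B with rfl | h
    · exact subset_rfl
    · rcases hchain hA₀D hB h with h' | h'
      · exact h'
      · exact hA₀min hB h'
  obtain ⟨F₀, _, ε, rfl⟩ := hsub hA₀D
  -- the singleton {ε} belongs to D
  have hεD : ({ε} : Set (Fin v → Fin n)) ∈ D := by
    have hins : insert ({ε} : Set (Fin v → Fin n)) D = D := by
      refine hmax _ (Set.insert_subset ⟨∅, hempty, ε, (face_empty ε).symm⟩ hsub)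
        (hchain.insert (fun B hB _ => Or.inl ?_)) (Set.subset_insert _ _)
      exact (Set.singleton_subset_iff.mpr (mem_face_self F₀ ε)).trans (hmin _ hB)
    rw [← hins]
    exact Set.mem_insert _ _
  have hεall : ∀ B ∈ D, ε ∈ B := by
    intro B hB
    obtain ⟨G, _, δ, rfl⟩ := hsub hB
    exact mem_of_chain_singleton hchain hεD hB (face_nonempty G δ)
  -- the chain 𝒞
  set 𝒞 : Set (Set (Fin v)) := {G | G ∈ 𝒦 ∧ face n v G ε ∈ D} with h𝒞def
  have hDeq : D = (fun F => face n v F ε) '' 𝒞 := by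
    apply Set.Subset.antisymm
    · intro B hB
      obtain ⟨G, hG, δ, rfl⟩ := hsub hB
      have h := mem_face_eq (hεall _ hB)
      rw [h] at hB ⊢
      exact ⟨G, ⟨hG, hB⟩, rfl⟩
    · rintro _ ⟨G, hG, rfl⟩
      exact hG.2
  have h𝒞chain : IsChain (· ⊆ ·) 𝒞 := by
    intro F hF G hG hFG
    have hne' : face n v F ε ≠ face n v G ε := fun h => hFG (face_inj hn h)
    rcases hchain hF.2 hG.2 hne' with h' | h'
    · exact Or.inl ((face_subset_iff hn).mp h').1
    · exact Or.inr ((face_subset_iff hn).mp h').1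
  refine ⟨ε, 𝒞, ⟨fun G hG => hG.1, h𝒞chain, ?_⟩, hDeq⟩
  intro 𝒞' h𝒞'sub h𝒞'chain h𝒞𝒞'
  have hD' : (fun F => face n v F ε) '' 𝒞' = D := by
    refine hmax _ ?_ (isChain_face_image hn h𝒞'chain ε) ?_
    · rintro _ ⟨G, hG, rfl⟩
      exact ⟨G, h𝒞'sub hG, ε, rfl⟩
    · rw [hDeq]
      exact Set.image_mono h𝒞𝒞'
  apply Set.Subset.antisymm _ h𝒞𝒞'
  intro G hG
  exact ⟨h𝒞'sub hG, hD' ▸ ⟨G, hG, rfl⟩⟩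

end Helpers

/-- Lemma 4.3: if `U ≤ S_n` is transitive on `N` and `Λ ≤ Aut(𝒦)` is transitive on the maximal
chains (flags) of `𝒦`, then the elements `θ_{σ,φ}` with `σ ∈ U^v`, `φ ∈ Λ` map `ℱ` bijectively
onto itself, and the group `U ≀ Λ` of all such elements acts transitively on the maximal chains
of `ℱ`; i.e. `U ≀ Λ` is a flag-transitive subgroup of the automorphism group of `n^𝒦`. -/
theorem wreath_flag_transitive (n v : ℕ) (hn : 2 ≤ n) (hv : 1 ≤ v)
    (𝒦 : Set (Set (Fin v))) (hempty : ∅ ∈ 𝒦)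
    (U : Subgroup (Equiv.Perm (Fin n)))
    (hU : ∀ x y : Fin n, ∃ u ∈ U, u x = y)
    (Λ : Subgroup (Equiv.Perm (Fin v)))
    (hΛAut : ∀ φ ∈ Λ, ∀ F : Set (Fin v), F ∈ 𝒦 ↔ φ '' F ∈ 𝒦)
    (hΛtrans : ∀ 𝒞 𝒞' : Set (Set (Fin v)), IsMaxChainIn 𝒦 𝒞 → IsMaxChainIn 𝒦 𝒞' →
      ∃ φ ∈ Λ, (fun F => φ '' F) '' 𝒞 = 𝒞') :
    (∀ (σ : Fin v → Equiv.Perm (Fin n)) (φ : Equiv.Perm (Fin v)),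
      (∀ i, σ i ∈ U) → φ ∈ Λ →
      Set.BijOn (fun A => theta σ φ '' A) (powerComplex n v 𝒦) (powerComplex n v 𝒦)) ∧
    (∀ D D' : Set (Set (Fin v → Fin n)),
      IsMaxChainIn (powerComplex n v 𝒦) D → IsMaxChainIn (powerComplex n v 𝒦) D' →
      ∃ (σ : Fin v → Equiv.Perm (Fin n)) (φ : Equiv.Perm (Fin v)),
        (∀ i, σ i ∈ U) ∧ φ ∈ Λ ∧ (fun A => theta σ φ '' A) '' D = D') := by
  constructor
  · intro σ φ hσ hφ
    refine ⟨?_, ?_, ?_⟩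
    · rintro A ⟨F, hF, ε, rfl⟩
      exact ⟨⇑φ '' F, (hΛAut φ hφ F).mp hF, theta σ φ ε, theta_image σ φ F ε⟩
    · intro A _ B _ h
      exact Set.image_injective.mpr (theta σ φ).injective h
    · rintro B ⟨G, hG, δ, rfl⟩
      have himg : ⇑φ '' (⇑φ⁻¹ '' G) = G := by
        rw [Set.image_image]
        simp
      refine ⟨face n v (⇑φ⁻¹ '' G) ((theta σ φ).symm δ), ⟨⇑φ⁻¹ '' G, ?_, _, rfl⟩, ?_⟩
      · rw [hΛAut φ hφ, himg]
        exact hG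
      · show theta σ φ '' face n v (⇑φ⁻¹ '' G) ((theta σ φ).symm δ) = face n v G δ
        rw [theta_image, himg, (theta σ φ).apply_symm_apply δ]
  · intro D D' hD hD'
    obtain ⟨ε, 𝒞, h𝒞, rfl⟩ := maxchain_structure hn hempty hD
    obtain ⟨ε', 𝒞', h𝒞', rfl⟩ := maxchain_structure hn hempty hD'
    obtain ⟨φ, hφ, hφ𝒞⟩ := hΛtrans 𝒞 𝒞' h𝒞 h𝒞'
    choose u hu hux using fun j => hU (ε j) (ε' (φ j))
    refine ⟨u, φ, hu, hφ, ?_⟩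
    have hθε : theta u φ ε = ε' := by
      funext i
      show u (φ⁻¹ i) (ε (φ⁻¹ i)) = ε' i
      rw [hux (φ⁻¹ i)]
      simp
    rw [Set.image_image]
    calc (fun F => theta u φ '' face n v F ε) '' 𝒞
        = (fun F => face n v (⇑φ '' F) ε') '' 𝒞 := by
          apply Set.image_congr'
          intro F
          rw [theta_image, hθε]
      _ = (fun G => face n v G ε') '' ((fun F => ⇑φ '' F) '' 𝒞) := by rw [Set.image_image]
      _ = (fun G => face n v G ε') '' 𝒞' := by rw [hφ𝒞]
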